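/- Special case of Bézout: if A ∈ K[x,y,z] is homogeneous of degree m with no common factor with the linear form L = y - βz (β ∈ K̄), then ∑_P i_P(A, L) = m; i.e., a curve of degree m meets a line in exactly m points counted with multiplicity. -/

import Mathlib

open MvPolynomial

noncomputable section BezoutDefs

set_option maxHeartbeats 1000000
set_option synthInstance.maxHeartbeats 200000

/-- The field of fractions of `F[x,y,z]`. -/
abbrev FracF (F : Type) [Field F] := FractionRing (MvPolynomial (Fin 3) F)

/-- The canonical map `F[x,y,z] → F(x,y,z)`. -/
abbrev toFrac (F : Type) [Field F] : MvPolynomial (Fin 3) F →+* FracF F :=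
  algebraMap (MvPolynomial (Fin 3) F) (FracF F)

/-- The local ring of degree-0 rational functions at a point `p`:
quotients `S/T` of homogeneous polynomials of equal degree with `T(p) ≠ 0`. -/
def Rloc (F : Type) [Field F] (p : Fin 3 → F) :
    Subalgebra F (FracF F) where
  carrier := {q | ∃ (S T : MvPolynomial (Fin 3) F) (d : ℕ),
      S.IsHomogeneous d ∧ T.IsHomogeneous d ∧ eval p T ≠ 0 ∧
      q * toFrac F T = toFrac F S}
  mul_mem' := by
    rintro q1 q2 ⟨S1, T1, d1, hS1, hT1, hTp1, h1⟩ ⟨S2, T2, d2, hS2, hT2, hTp2, h2⟩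
    refine ⟨S1 * S2, T1 * T2, d1 + d2, hS1.mul hS2, hT1.mul hT2, by simp [hTp1, hTp2], ?_⟩
    rw [map_mul, map_mul]
    linear_combination (q2 * toFrac F T2) * h1 + (toFrac F S1) * h2
  one_mem' := ⟨1, 1, 0, isHomogeneous_one _ _, isHomogeneous_one _ _, by simp, by simp⟩
  add_mem' := by
    rintro q1 q2 ⟨S1, T1, d1, hS1, hT1, hTp1, h1⟩ ⟨S2, T2, d2, hS2, hT2, hTp2, h2⟩
    refine ⟨S1 * T2 + S2 * T1, T1 * T2, d1 + d2,
      (hS1.mul hT2).add (by simpa [Nat.add_comm] using hS2.mul hT1),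
      hT1.mul hT2, by simp [hTp1, hTp2], ?_⟩
    rw [map_add, map_mul, map_mul, map_mul]
    linear_combination (toFrac F T2) * h1 + (toFrac F T1) * h2
  zero_mem' := ⟨0, 1, 0, isHomogeneous_zero _ _ _, isHomogeneous_one _ _, by simp, by simp⟩
  algebraMap_mem' := by
    intro r
    refine ⟨C r, 1, 0, isHomogeneous_C _ _, isHomogeneous_one _ _, by simp, ?_⟩
    simp [IsScalarTower.algebraMap_apply F (MvPolynomial (Fin 3) F) (FracF F)]

/-- The ideal of `Rloc F p` generated by the curves `A` and `B`. -/
def interIdeal (F : Type) [Field F] (p : Fin 3 → F) (A B : MvPolynomial (Fin 3) F) :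
    Ideal (Rloc F p) :=
  Ideal.span {q : Rloc F p | ∃ (M N T : MvPolynomial (Fin 3) F) (d : ℕ),
    (M * A + N * B).IsHomogeneous d ∧ T.IsHomogeneous d ∧ eval p T ≠ 0 ∧
    q.1 * toFrac F T = toFrac F (M * A + N * B)}

/-- Intersection multiplicity of the curves `A` and `B` at the point `p`. -/
def interMult (F : Type) [Field F] (p : Fin 3 → F) (A B : MvPolynomial (Fin 3) F) : ℕ :=
  Module.finrank F ((Rloc F p) ⧸ (interIdeal F p A B))

end BezoutDefs

open MvPolynomial

namespace BezoutAux

noncomputable section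

set_option maxHeartbeats 1000000
set_option synthInstance.maxHeartbeats 400000
set_option linter.unusedSectionVars false

variable {k : Type} [Field k]

lemma toFrac_inj : Function.Injective (toFrac k) :=
  IsFractionRing.injective (MvPolynomial (Fin 3) k) (FracF k)

lemma mem_Rloc_iff {p : Fin 3 → k} {q : FracF k} :
    q ∈ Rloc k p ↔ ∃ (S T : MvPolynomial (Fin 3) k) (d : ℕ),
      S.IsHomogeneous d ∧ T.IsHomogeneous d ∧ eval p T ≠ 0 ∧
      q * toFrac k T = toFrac k S := Iff.rfl

lemma degree_sum_univ {u : Fin 3 →₀ ℕ} : u.degree = u 0 + u 1 + u 2 := by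
  have h : u.degree = ∑ i : Fin 3, u i := by
    refine Finset.sum_subset (Finset.subset_univ _) ?_
    intro i _ hi
    exact Finsupp.notMem_support_iff.mp hi
  rw [h, Fin.sum_univ_three]

lemma homog_degree {S : MvPolynomial (Fin 3) k} {d : ℕ} (hS : S.IsHomogeneous d)
    {u : Fin 3 →₀ ℕ} (hu : u ∈ S.support) : u 0 + u 1 + u 2 = d := by
  have := hS (mem_support_iff.mp hu)
  rw [← degree_sum_univ]
  rw [Finsupp.degree_eq_weight_one]; exact this

lemma eval_smul_homog {S : MvPolynomial (Fin 3) k} {d : ℕ} (hS : S.IsHomogeneous d)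
    (c : k) (p : Fin 3 → k) : eval (c • p) S = c ^ d * eval p S := by
  conv_lhs => rw [S.as_sum]
  conv_rhs => rw [S.as_sum]
  rw [map_sum, map_sum, Finset.mul_sum]
  refine Finset.sum_congr rfl fun u hu => ?_
  have hdeg : u 0 + u 1 + u 2 = d := homog_degree hS hu
  rw [eval_monomial, eval_monomial, Finsupp.prod_pow, Finsupp.prod_pow]
  simp only [Fin.prod_univ_three, Pi.smul_apply, smul_eq_mul, mul_pow]
  rw [← hdeg]
  ring

/-- the substitution `y ↦ β z`. -/
def psi (β : k) : MvPolynomial (Fin 3) k →ₐ[k] MvPolynomial (Fin 3) k :=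
  aeval ![X 0, C β * X 2, X 2]

lemma psi_X0 (β : k) : psi β (X 0) = X 0 := by simp [psi]
lemma psi_X1 (β : k) : psi β (X 1) = C β * X 2 := by simp [psi]
lemma psi_X2 (β : k) : psi β (X 2) = X 2 := by simp [psi]
lemma psi_C (β c : k) : psi β (C c) = C c := by simp [psi]

lemma L_dvd_sub_psi (β : k) (P : MvPolynomial (Fin 3) k) :
    (X 1 - C β * X 2) ∣ (P - psi β P) := by
  induction P using MvPolynomial.induction_on with
  | C a => simp [psi_C]
  | add p q hp hq =>
      rw [map_add]
      have : p + q - (psi β p + psi β q) = (p - psi β p) + (q - psi β q) := by ring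
      rw [this]; exact dvd_add hp hq
  | mul_X p i hp =>
      have h2 : (X 1 - C β * X 2) ∣ (X i - psi β (X i)) := by
        fin_cases i
        · show (X 1 - C β * X 2) ∣ (X 0 - psi β (X 0)); simp [psi_X0]
        · show (X 1 - C β * X 2) ∣ (X 1 - psi β (X 1)); rw [psi_X1]
        · show (X 1 - C β * X 2) ∣ (X 2 - psi β (X 2)); simp [psi_X2]
      obtain ⟨a, ha⟩ := hp
      obtain ⟨b, hb⟩ := h2
      refine ⟨a * X i + psi β p * b, ?_⟩
      rw [map_mul]
      linear_combination (X i : MvPolynomial (Fin 3) k) * ha + psi β p * hb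

lemma L_isHomog (β : k) : ((X 1 : MvPolynomial (Fin 3) k) - C β * X 2).IsHomogeneous 1 :=
  (isHomogeneous_X _ _).sub ((isHomogeneous_X (R := k) 2).C_mul β)

lemma L_not_unit (β : k) : ¬ IsUnit ((X 1 : MvPolynomial (Fin 3) k) - C β * X 2) := by
  intro h
  have h2 := h.map (aeval ![(0 : Polynomial k), Polynomial.X, 0] : MvPolynomial (Fin 3) k →ₐ[k] Polynomial k)
  rw [map_sub, map_mul, aeval_X, aeval_X, aeval_C] at h2
  simp only [Matrix.cons_val_one, Matrix.head_cons, Matrix.cons_val_two, Matrix.tail_cons,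
    mul_zero, sub_zero] at h2
  exact Polynomial.not_isUnit_X h2

section LocalCalc

variable (β : k) (π : MvPolynomial (Fin 3) k →ₐ[k] Polynomial k)
  (ℓ ζ : MvPolynomial (Fin 3) k)

lemma pi_C (c : k) : π (C c) = Polynomial.C c := by
  rw [← MvPolynomial.algebraMap_eq, AlgHom.commutes, Polynomial.algebraMap_eq]

/-- homogenization with respect to the "coordinates" ℓ, ζ. -/
def Lam (d : ℕ) (g : Polynomial k) : MvPolynomial (Fin 3) k :=
  ∑ i ∈ Finset.range (d + 1), C (g.coeff i) * ℓ ^ i * ζ ^ (d - i)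

lemma Lam_zero (d : ℕ) : Lam ℓ ζ d 0 = 0 := by simp [Lam]

variable {ℓ ζ}
variable (hℓ : ℓ.IsHomogeneous 1) (hζ : ζ.IsHomogeneous 1)
  (hπℓ : π ℓ = Polynomial.X) (hπζ : π ζ = 1)

section
include hℓ hζ

lemma Lam_homog (d : ℕ) (g : Polynomial k) : (Lam ℓ ζ d g).IsHomogeneous d := by
  refine IsHomogeneous.sum _ _ _ fun i hi => ?_
  have hi' : i ≤ d := Nat.lt_succ_iff.mp (Finset.mem_range.mp hi)
  have h1 : (ℓ ^ i * ζ ^ (d - i)).IsHomogeneous d := by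
    have := (hℓ.pow i).mul (hζ.pow (d - i))
    simpa [Nat.one_mul, Nat.add_sub_cancel' hi'] using this
  simpa [mul_assoc] using h1.C_mul (g.coeff i)

end

lemma Lam_mem_span (d : ℕ) (g : Polynomial k) :
    Lam ℓ ζ d g ∈ Submodule.span k
      (Set.range fun i : Fin (d + 1) => ℓ ^ (i : ℕ) * ζ ^ (d - (i : ℕ))) := by
  refine Submodule.sum_mem _ fun i hi => ?_
  have hi' : i < d + 1 := Finset.mem_range.mp hi
  rw [mul_assoc, ← smul_eq_C_mul]
  exact Submodule.smul_mem _ _ (Submodule.subset_span ⟨⟨i, hi'⟩, rfl⟩)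

section
include hπℓ hπζ

lemma pi_Lam {d : ℕ} {g : Polynomial k} (hg : g.natDegree ≤ d) : π (Lam ℓ ζ d g) = g := by
  rw [Lam, map_sum]
  conv_rhs => rw [g.as_sum_range' (d + 1) (Nat.lt_succ_of_le hg)]
  refine Finset.sum_congr rfl fun i _ => ?_
  rw [map_mul, map_mul, map_pow, map_pow, hπℓ, hπζ, pi_C, one_pow, mul_one,
    Polynomial.C_mul_X_pow_eq_monomial]

/-- coefficients of a polynomial written as a `Fin (d+1)`-indexed sum. -/
lemma coeff_finsum (d : ℕ) (c : Fin (d + 1) → k) (j : ℕ) :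
    (∑ i : Fin (d + 1), Polynomial.C (c i) * Polynomial.X ^ (i : ℕ)).coeff j =
      if h : j < d + 1 then c ⟨j, h⟩ else 0 := by
  rw [Polynomial.finset_sum_coeff]
  simp only [Polynomial.coeff_C_mul, Polynomial.coeff_X_pow]
  split
  · rename_i h
    rw [Finset.sum_eq_single (⟨j, h⟩ : Fin (d + 1))]
    · simp
    · intro i _ hne
      have : j ≠ (i : ℕ) := by
        intro he; exact hne (by ext; simp [← he])
      simp [this]
    · simp
  · rename_i h
    refine Finset.sum_eq_zero fun i _ => ?_
    have : j ≠ (i : ℕ) := by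
      have := i.2; omega
    simp [this]

lemma pi_span_coeffs {d : ℕ} {P : MvPolynomial (Fin 3) k} {c : Fin (d + 1) → k}
    (hP : P = ∑ i : Fin (d + 1), C (c i) * ℓ ^ (i : ℕ) * ζ ^ (d - (i : ℕ))) :
    π P = ∑ i : Fin (d + 1), Polynomial.C (c i) * Polynomial.X ^ (i : ℕ) := by
  rw [hP, map_sum]
  refine Finset.sum_congr rfl fun i _ => ?_
  rw [map_mul, map_mul, map_pow, map_pow, hπℓ, hπζ, pi_C, one_pow, mul_one]

/-- every element of the span has a canonical coefficient representation. -/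
lemma span_repr {d : ℕ} {P : MvPolynomial (Fin 3) k}
    (hP : P ∈ Submodule.span k
      (Set.range fun i : Fin (d + 1) => ℓ ^ (i : ℕ) * ζ ^ (d - (i : ℕ)))) :
    ∃ c : Fin (d + 1) → k,
      P = ∑ i : Fin (d + 1), C (c i) * ℓ ^ (i : ℕ) * ζ ^ (d - (i : ℕ)) ∧
      π P = ∑ i : Fin (d + 1), Polynomial.C (c i) * Polynomial.X ^ (i : ℕ) := by
  obtain ⟨c, hc⟩ := (Submodule.mem_span_range_iff_exists_fun k).mp hP
  have h1 : P = ∑ i : Fin (d + 1), C (c i) * ℓ ^ (i : ℕ) * ζ ^ (d - (i : ℕ)) := by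
    rw [← hc]
    exact Finset.sum_congr rfl fun i _ => by rw [mul_assoc, ← smul_eq_C_mul]
  exact ⟨c, h1, pi_span_coeffs π hπℓ hπζ h1⟩

lemma span_pi_inj {d : ℕ} {P Q : MvPolynomial (Fin 3) k}
    (hP : P ∈ Submodule.span k
      (Set.range fun i : Fin (d + 1) => ℓ ^ (i : ℕ) * ζ ^ (d - (i : ℕ))))
    (hQ : Q ∈ Submodule.span k
      (Set.range fun i : Fin (d + 1) => ℓ ^ (i : ℕ) * ζ ^ (d - (i : ℕ))))
    (h : π P = π Q) : P = Q := by
  obtain ⟨c, hc1, hc2⟩ := span_repr π hπℓ hπζ hP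
  obtain ⟨c', hc1', hc2'⟩ := span_repr π hπℓ hπζ hQ
  have hcc : c = c' := by
    funext i
    have h1 := coeff_finsum π hπℓ hπζ d c (i : ℕ)
    have h2 := coeff_finsum π hπℓ hπζ d c' (i : ℕ)
    rw [← hc2, h, hc2'] at h1
    rw [h2] at h1
    simpa [i.2] using h1.symm
  rw [hc1, hc1', hcc]

end

variable (hψℓ : psi β ℓ = ℓ) (hψζ : psi β ζ = ζ)
  (hπψ : ∀ S, π (psi β S) = π S)
  (hspan : ∀ (d : ℕ) (S : MvPolynomial (Fin 3) k), S.IsHomogeneous d →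
    psi β S ∈ Submodule.span k
      (Set.range fun i : Fin (d + 1) => ℓ ^ (i : ℕ) * ζ ^ (d - (i : ℕ))))

section
include hπℓ hπζ hπψ hspan

lemma natDeg_pi {d : ℕ} {S : MvPolynomial (Fin 3) k} (hS : S.IsHomogeneous d) :
    (π S).natDegree ≤ d := by
  obtain ⟨c, _, hc2⟩ := span_repr π hπℓ hπζ (hspan d S hS)
  rw [hπψ] at hc2
  rw [Polynomial.natDegree_le_iff_coeff_eq_zero]
  intro N hN
  rw [hc2, coeff_finsum π hπℓ hπζ]
  rw [dif_neg (by omega)]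

lemma Lam_psi {d : ℕ} {S : MvPolynomial (Fin 3) k} (hS : S.IsHomogeneous d) :
    psi β S = Lam ℓ ζ d (π S) := by
  obtain ⟨c, hc1, hc2⟩ := span_repr π hπℓ hπζ (hspan d S hS)
  rw [hπψ] at hc2
  rw [hc1, Lam]
  rw [Finset.sum_range fun i => C ((π S).coeff i) * ℓ ^ i * ζ ^ (d - i)]
  refine Finset.sum_congr rfl fun i _ => ?_
  rw [hc2, coeff_finsum π hπℓ hπζ, dif_pos i.2]

end

section
include hπℓ hπζ

lemma psi_Lam (hψℓ' : psi β ℓ = ℓ) (hψζ' : psi β ζ = ζ) (d : ℕ) (g : Polynomial k) :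
    psi β (Lam ℓ ζ d g) = Lam ℓ ζ d g := by
  rw [Lam, map_sum]
  refine Finset.sum_congr rfl fun i _ => ?_
  rw [map_mul, map_mul, map_pow, map_pow, hψℓ', hψζ', psi_C]

lemma Lam_mul {d1 d2 : ℕ} {g h : Polynomial k} (hg : g.natDegree ≤ d1)
    (hh : h.natDegree ≤ d2) :
    Lam ℓ ζ d1 g * Lam ℓ ζ d2 h = Lam ℓ ζ (d1 + d2) (g * h) := by
  refine span_pi_inj π hπℓ hπζ (d := d1 + d2) ?_ (Lam_mem_span _ _) ?_
  · rw [Lam, Lam, Finset.sum_mul_sum]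
    refine Submodule.sum_mem _ fun i hi => Submodule.sum_mem _ fun j hj => ?_
    have hi' : i ≤ d1 := Nat.lt_succ_iff.mp (Finset.mem_range.mp hi)
    have hj' : j ≤ d2 := Nat.lt_succ_iff.mp (Finset.mem_range.mp hj)
    have heq : C (g.coeff i) * ℓ ^ i * ζ ^ (d1 - i) * (C (h.coeff j) * ℓ ^ j * ζ ^ (d2 - j)) =
        (g.coeff i * h.coeff j) • (ℓ ^ (i + j) * ζ ^ ((d1 + d2) - (i + j))) := by
      rw [smul_eq_C_mul, map_mul, show (d1 + d2) - (i + j) = (d1 - i) + (d2 - j) by omega,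
        pow_add, pow_add]
      ring
    rw [heq]
    exact Submodule.smul_mem _ _ (Submodule.subset_span ⟨⟨i + j, by omega⟩, rfl⟩)
  · rw [map_mul, pi_Lam π hπℓ hπζ hg, pi_Lam π hπℓ hπζ hh,
      pi_Lam π hπℓ hπζ (Polynomial.natDegree_mul_le.trans (add_le_add hg hh))]

end

end LocalCalc

section Phi

variable {p : Fin 3 → k} (π : MvPolynomial (Fin 3) k →ₐ[k] Polynomial k) (e : ℕ)

/-- chosen numerator of an element of the local ring -/
def wS (q : Rloc k p) : MvPolynomial (Fin 3) k := (mem_Rloc_iff.mp q.2).choose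

/-- chosen denominator -/
def wT (q : Rloc k p) : MvPolynomial (Fin 3) k :=
  (mem_Rloc_iff.mp q.2).choose_spec.choose

/-- chosen degree -/
def wd (q : Rloc k p) : ℕ :=
  (mem_Rloc_iff.mp q.2).choose_spec.choose_spec.choose

lemma w_spec (q : Rloc k p) :
    (wS q).IsHomogeneous (wd q) ∧ (wT q).IsHomogeneous (wd q) ∧ eval p (wT q) ≠ 0 ∧
      (q : FracF k) * toFrac k (wT q) = toFrac k (wS q) :=
  (mem_Rloc_iff.mp q.2).choose_spec.choose_spec.choose_spec

/-- quotient ring `k[X]/(X^e)` -/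
abbrev Qe := AdjoinRoot ((Polynomial.X : Polynomial k) ^ e)

lemma isUnit_mk {g : Polynomial k} (hg : g.coeff 0 ≠ 0) :
    IsUnit (AdjoinRoot.mk ((Polynomial.X : Polynomial k) ^ e) g) := by
  have h1 : g = Polynomial.C (g.coeff 0) + Polynomial.X * g.divX := by
    rw [add_comm]; exact (Polynomial.X_mul_divX_add g).symm
  have hnil : IsNilpotent (AdjoinRoot.mk ((Polynomial.X : Polynomial k) ^ e)
      (Polynomial.X * g.divX)) := by
    refine ⟨e, ?_⟩
    rw [← map_pow, AdjoinRoot.mk_eq_zero, mul_pow]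
    exact dvd_mul_right _ _
  have hunit : IsUnit (AdjoinRoot.mk ((Polynomial.X : Polynomial k) ^ e)
      (Polynomial.C (g.coeff 0))) :=
    (Polynomial.isUnit_C.mpr hg.isUnit).map _
  rw [show g = Polynomial.C (g.coeff 0) + Polynomial.X * g.divX from h1, map_add]
  exact hnil.isUnit_add_left_of_commute hunit (Commute.all _ _)

variable (hpev : ∀ (d : ℕ) (T : MvPolynomial (Fin 3) k), T.IsHomogeneous d →
    (eval p T = 0 ↔ (π T).coeff 0 = 0))

/-- the evaluation map from the local ring to `k[X]/(X^e)` -/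
def phi (q : Rloc k p) : Qe (k := k) e :=
  AdjoinRoot.mk _ (π (wS q)) * Ring.inverse (AdjoinRoot.mk ((Polynomial.X : Polynomial k) ^ e) (π (wT q)))

include hpev

lemma unit_of_denom {d : ℕ} {T : MvPolynomial (Fin 3) k} (hT : T.IsHomogeneous d)
    (hTp : eval p T ≠ 0) :
    IsUnit (AdjoinRoot.mk ((Polynomial.X : Polynomial k) ^ e) (π T)) :=
  isUnit_mk e (fun h => hTp ((hpev d T hT).mpr h))

lemma phi_spec (q : Rloc k p) {S T : MvPolynomial (Fin 3) k} {d : ℕ}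
    (hT : T.IsHomogeneous d) (hTp : eval p T ≠ 0)
    (hq : (q : FracF k) * toFrac k T = toFrac k S) :
    phi π e q * AdjoinRoot.mk _ (π T) = AdjoinRoot.mk ((Polynomial.X : Polynomial k) ^ e) (π S) := by
  obtain ⟨hS0, hT0, hTp0, hq0⟩ := w_spec q
  have hcross : S * wT q = wS q * T := by
    apply toFrac_inj
    rw [map_mul, map_mul, ← hq, ← hq0]
    ring
  have hu0 : IsUnit (AdjoinRoot.mk ((Polynomial.X : Polynomial k) ^ e) (π (wT q))) :=
    unit_of_denom π e hpev hT0 hTp0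
  refine hu0.mul_left_cancel ?_
  have hinv := Ring.mul_inverse_cancel _ hu0
  calc AdjoinRoot.mk ((Polynomial.X : Polynomial k) ^ e) (π (wT q)) * (phi π e q * AdjoinRoot.mk _ (π T))
      = (AdjoinRoot.mk ((Polynomial.X : Polynomial k) ^ e) (π (wT q)) *
          Ring.inverse (AdjoinRoot.mk ((Polynomial.X : Polynomial k) ^ e) (π (wT q)))) *
        (AdjoinRoot.mk _ (π (wS q)) * AdjoinRoot.mk _ (π T)) := by rw [phi]; ring
    _ = AdjoinRoot.mk _ (π (wS q)) * AdjoinRoot.mk _ (π T) := by rw [hinv, one_mul]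
    _ = AdjoinRoot.mk ((Polynomial.X : Polynomial k) ^ e) (π (wS q * T)) := by rw [map_mul, map_mul]
    _ = AdjoinRoot.mk ((Polynomial.X : Polynomial k) ^ e) (π (S * wT q)) := by rw [hcross]
    _ = _ := by rw [map_mul, map_mul]; ring

lemma phi_one : phi π e (1 : Rloc k p) = 1 := by
  have h := phi_spec π e hpev (1 : Rloc k p) (T := 1) (S := 1) (d := 0)
    (isHomogeneous_one _ _) (by simp) (by simp)
  simpa using h

lemma phi_zero : phi π e (0 : Rloc k p) = 0 := by
  have h := phi_spec π e hpev (0 : Rloc k p) (T := 1) (S := 0) (d := 0)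
    (isHomogeneous_one _ _) (by simp) (by simp)
  simpa using h

lemma phi_mul (q1 q2 : Rloc k p) :
    phi π e (q1 * q2) = phi π e q1 * phi π e q2 := by
  obtain ⟨S1, T1, d1, hS1, hT1, hTp1, h1⟩ := mem_Rloc_iff.mp q1.2
  obtain ⟨S2, T2, d2, hS2, hT2, hTp2, h2⟩ := mem_Rloc_iff.mp q2.2
  have hT12 : (T1 * T2).IsHomogeneous (d1 + d2) := hT1.mul hT2
  have hTp12 : eval p (T1 * T2) ≠ 0 := by simp [hTp1, hTp2]
  have hq12 : ((q1 * q2 : Rloc k p) : FracF k) * toFrac k (T1 * T2) = toFrac k (S1 * S2) := by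
    have hco : ((q1 * q2 : Rloc k p) : FracF k) = (q1 : FracF k) * (q2 : FracF k) := rfl
    rw [hco, map_mul, map_mul]
    linear_combination ((q2 : FracF k) * toFrac k T2) * h1 + (toFrac k S1) * h2
  have hL := phi_spec π e hpev (q1 * q2) hT12 hTp12 hq12
  have hR1 := phi_spec π e hpev q1 hT1 hTp1 h1
  have hR2 := phi_spec π e hpev q2 hT2 hTp2 h2
  have hu : IsUnit (AdjoinRoot.mk ((Polynomial.X : Polynomial k) ^ e) (π (T1 * T2))) :=
    unit_of_denom π e hpev hT12 hTp12
  refine hu.mul_right_cancel ?_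
  rw [hL, map_mul π S1 S2, map_mul (AdjoinRoot.mk _), ← hR1, ← hR2, map_mul π T1 T2,
    map_mul (AdjoinRoot.mk _)]
  ring

lemma phi_add (q1 q2 : Rloc k p) :
    phi π e (q1 + q2) = phi π e q1 + phi π e q2 := by
  obtain ⟨S1, T1, d1, hS1, hT1, hTp1, h1⟩ := mem_Rloc_iff.mp q1.2
  obtain ⟨S2, T2, d2, hS2, hT2, hTp2, h2⟩ := mem_Rloc_iff.mp q2.2
  have hT12 : (T1 * T2).IsHomogeneous (d1 + d2) := hT1.mul hT2
  have hTp12 : eval p (T1 * T2) ≠ 0 := by simp [hTp1, hTp2]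
  have hq12 : ((q1 + q2 : Rloc k p) : FracF k) * toFrac k (T1 * T2) =
      toFrac k (S1 * T2 + S2 * T1) := by
    have hco : ((q1 + q2 : Rloc k p) : FracF k) = (q1 : FracF k) + (q2 : FracF k) := rfl
    rw [hco, map_add, map_mul, map_mul, map_mul]
    linear_combination (toFrac k T2) * h1 + (toFrac k T1) * h2
  have hL := phi_spec π e hpev (q1 + q2) hT12 hTp12 hq12
  have hR1 := phi_spec π e hpev q1 hT1 hTp1 h1
  have hR2 := phi_spec π e hpev q2 hT2 hTp2 h2
  have hu : IsUnit (AdjoinRoot.mk ((Polynomial.X : Polynomial k) ^ e) (π (T1 * T2))) :=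
    unit_of_denom π e hpev hT12 hTp12
  refine hu.mul_right_cancel ?_
  rw [hL, map_add π, map_add, map_mul π S1 T2, map_mul π S2 T1, map_mul (AdjoinRoot.mk _) (π S1),
    map_mul (AdjoinRoot.mk _) (π S2), ← hR1, ← hR2, map_mul π T1 T2, map_mul (AdjoinRoot.mk _)]
  ring

lemma phi_algebraMap (r : k) :
    phi π e (algebraMap k (Rloc k p) r) = algebraMap k (Qe (k := k) e) r := by
  have hmem : (algebraMap k (Rloc k p) r : FracF k) * toFrac k 1 = toFrac k (C r) := by
    have : (algebraMap k (Rloc k p) r : FracF k) = algebraMap k (FracF k) r := rfl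
    rw [this, map_one, mul_one,
      IsScalarTower.algebraMap_apply k (MvPolynomial (Fin 3) k) (FracF k)]
    rfl
  have h := phi_spec π e hpev (algebraMap k (Rloc k p) r) (T := 1) (S := C r) (d := 0)
    (isHomogeneous_one _ _) (by simp) hmem
  simp only [map_one] at h
  rw [mul_one] at h
  rw [h, pi_C]
  rfl

/-- the evaluation map as an algebra homomorphism -/
def Phi : Rloc k p →ₐ[k] Qe (k := k) e where
  toFun := phi π e
  map_one' := phi_one π e hpev
  map_mul' := phi_mul π e hpev
  map_zero' := phi_zero π e hpev
  map_add' := phi_add π e hpev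
  commutes' := phi_algebraMap π e hpev

lemma Phi_apply (q : Rloc k p) : Phi π e hpev q = phi π e q := rfl

end Phi

section LocalMain

variable {p : Fin 3 → k} {β : k} {π : MvPolynomial (Fin 3) k →ₐ[k] Polynomial k}
  {ℓ ζ : MvPolynomial (Fin 3) k}

theorem local_interMult
    (hℓ : ℓ.IsHomogeneous 1) (hζ : ζ.IsHomogeneous 1)
    (hπℓ : π ℓ = Polynomial.X) (hπζ : π ζ = 1)
    (hψℓ : psi β ℓ = ℓ) (hψζ : psi β ζ = ζ)
    (hπψ : ∀ S, π (psi β S) = π S)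
    (hspan : ∀ (d : ℕ) (S : MvPolynomial (Fin 3) k), S.IsHomogeneous d →
      psi β S ∈ Submodule.span k
        (Set.range fun i : Fin (d + 1) => ℓ ^ (i : ℕ) * ζ ^ (d - (i : ℕ))))
    (hpev : ∀ (d : ℕ) (T : MvPolynomial (Fin 3) k), T.IsHomogeneous d →
      (eval p T = 0 ↔ (π T).coeff 0 = 0))
    (hπL : π (X 1 - C β * X 2) = 0)
    (B : MvPolynomial (Fin 3) k) (m : ℕ) (hB : B.IsHomogeneous m)
    (e : ℕ) (u : Polynomial k) (hBu : π B = Polynomial.X ^ e * u) (hu : u.coeff 0 ≠ 0) :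
    interMult k p B (X 1 - C β * X 2) = e := by
  set L : MvPolynomial (Fin 3) k := X 1 - C β * X 2 with hLdef
  have hu_ne : u ≠ 0 := fun h => hu (by simp [h])
  have hπB_ne : π B ≠ 0 := by
    rw [hBu]; exact mul_ne_zero (pow_ne_zero _ Polynomial.X_ne_zero) hu_ne
  have hπBdeg : (π B).natDegree ≤ m := natDeg_pi β π hπℓ hπζ hπψ hspan hB
  have hem : e + u.natDegree ≤ m := by
    rw [hBu, Polynomial.natDegree_mul (pow_ne_zero _ Polynomial.X_ne_zero) hu_ne,
      Polynomial.natDegree_X_pow] at hπBdeg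
    exact hπBdeg
  have he_m : e ≤ m := le_trans (Nat.le_add_right _ _) hem
  have hub : u.natDegree ≤ m - e := by omega
  -- the algebra hom
  set Φ := Phi π e hpev with hΦdef
  -- surjectivity
  have hsurj : Function.Surjective Φ := by
    intro y
    obtain ⟨g, rfl⟩ := AdjoinRoot.mk_surjective y
    set d := g.natDegree with hd
    have hζd : ((ζ : MvPolynomial (Fin 3) k) ^ d).IsHomogeneous d := by
      simpa using hζ.pow d
    have hπζd : π (ζ ^ d) = 1 := by rw [map_pow, hπζ, one_pow]
    have hζev : eval p (ζ ^ d) ≠ 0 := by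
      intro h
      have := (hpev d (ζ ^ d) hζd).mp h
      rw [hπζd] at this
      simp at this
    have hT_ne : (ζ ^ d : MvPolynomial (Fin 3) k) ≠ 0 := by
      intro h; rw [h] at hζev; simp at hζev
    have htT_ne : toFrac k (ζ ^ d) ≠ 0 := by
      simpa using (map_ne_zero_iff _ toFrac_inj).mpr hT_ne
    set qv : FracF k := toFrac k (Lam ℓ ζ d g) * (toFrac k (ζ ^ d))⁻¹ with hqv
    have hqT : qv * toFrac k (ζ ^ d) = toFrac k (Lam ℓ ζ d g) := by
      rw [hqv, mul_assoc, inv_mul_cancel₀ htT_ne, mul_one]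
    have hmem : qv ∈ Rloc k p :=
      ⟨Lam ℓ ζ d g, ζ ^ d, d, Lam_homog hℓ hζ d g, hζd, hζev, hqT⟩
    refine ⟨⟨qv, hmem⟩, ?_⟩
    have hspec := phi_spec π e hpev ⟨qv, hmem⟩ hζd hζev hqT
    rw [hπζd, map_one, mul_one] at hspec
    rw [hΦdef, Phi_apply, hspec, pi_Lam π hπℓ hπζ (le_refl d)]
  -- kernel = interIdeal
  have hker : RingHom.ker Φ = interIdeal k p B L := by
    apply le_antisymm
    · intro q hq
      rw [RingHom.mem_ker] at hq
      obtain ⟨S, T, d, hS, hT, hTp, hqT⟩ := mem_Rloc_iff.mp q.2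
      have hspec := phi_spec π e hpev q hT hTp hqT
      rw [hΦdef, Phi_apply] at hq
      rw [hq, zero_mul] at hspec
      have hdvd : Polynomial.X ^ e ∣ π S := AdjoinRoot.mk_eq_zero.mp hspec.symm
      obtain ⟨w, hw⟩ := hdvd
      have hwcases : w = 0 ∨ (e ≤ d ∧ w.natDegree ≤ d - e) := by
        by_cases hS0 : π S = 0
        · left
          rw [hS0] at hw
          exact (mul_eq_zero.mp hw.symm).resolve_left (pow_ne_zero _ Polynomial.X_ne_zero)
        · right
          have hw_ne : w ≠ 0 := fun h => hS0 (by rw [hw, h, mul_zero])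
          have : (π S).natDegree = e + w.natDegree := by
            rw [hw, Polynomial.natDegree_mul (pow_ne_zero _ Polynomial.X_ne_zero) hw_ne,
              Polynomial.natDegree_X_pow]
          have hSd : (π S).natDegree ≤ d := natDeg_pi β π hπℓ hπζ hπψ hspan hS
          omega
      set U := Lam ℓ ζ (m - e) u with hU
      set W := Lam ℓ ζ (d - e) w with hW
      have hXew : (Polynomial.X ^ e * w).natDegree ≤ d := by
        rw [← hw]
        exact natDeg_pi β π hπℓ hπζ hπψ hspan hS
      have key : psi β (S * U) = psi β (B * W) := by
        rw [map_mul, map_mul, Lam_psi β π hπℓ hπζ hπψ hspan hS,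
          Lam_psi β π hπℓ hπζ hπψ hspan hB,
          psi_Lam β π hπℓ hπζ hψℓ hψζ, psi_Lam β π hπℓ hπζ hψℓ hψζ, hw, hBu]
        rcases hwcases with h0 | ⟨hed, hwd⟩
        · rw [h0, mul_zero, Lam_zero, zero_mul, Lam_zero, mul_zero]
        · rw [Lam_mul π hπℓ hπζ hXew hub, Lam_mul π hπℓ hπζ (hBu ▸ hπBdeg) hwd,
            show d + (m - e) = m + (d - e) by omega,
            show Polynomial.X ^ e * w * u = Polynomial.X ^ e * u * w by ring]
      obtain ⟨N, hN⟩ := L_dvd_sub_psi β (S * U - B * W)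
      rw [map_sub, key, sub_self, sub_zero] at hN
      have hSU : S * U = W * B + N * L := by linear_combination hN
      refine Ideal.subset_span ⟨W, N, T * U, d + (m - e), ?_, ?_, ?_, ?_⟩
      · rw [← hSU]
        exact hS.mul (Lam_homog hℓ hζ (m - e) u)
      · exact hT.mul (Lam_homog hℓ hζ (m - e) u)
      · rw [map_mul]
        refine mul_ne_zero hTp ?_
        intro h
        have := (hpev (m - e) U (Lam_homog hℓ hζ (m - e) u)).mp h
        rw [hU, pi_Lam π hπℓ hπζ hub] at this
        exact hu this
      · rw [← hSU, map_mul, map_mul, ← mul_assoc, hqT]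
    · rw [interIdeal, Ideal.span_le]
      rintro q ⟨M, N, T, d, hMN, hT, hTp, hqT⟩
      rw [SetLike.mem_coe, RingHom.mem_ker]
      have hspec := phi_spec π e hpev q hT hTp hqT
      have hMk : AdjoinRoot.mk ((Polynomial.X : Polynomial k) ^ e) (π (M * B + N * L)) = 0 := by
        rw [AdjoinRoot.mk_eq_zero, map_add, map_mul, map_mul, hBu, hπL, mul_zero, add_zero]
        exact ⟨π M * u, by ring⟩
      rw [hMk] at hspec
      have hu0 : IsUnit (AdjoinRoot.mk ((Polynomial.X : Polynomial k) ^ e) (π T)) :=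
        unit_of_denom π e hpev hT hTp
      rw [hΦdef, Phi_apply]
      exact hu0.mul_right_cancel (by rw [hspec, zero_mul])
  -- conclude via the first isomorphism theorem
  have hiso := Ideal.quotientKerAlgEquivOfSurjective hsurj
  have hiso := (Ideal.quotientEquivAlgOfEq k hker).symm.trans hiso
  have hfr : interMult k p B L = Module.finrank k (Qe (k := k) e) := by
    rw [interMult]
    exact LinearEquiv.finrank_eq hiso.toLinearEquiv
  rw [hfr]
  -- finrank of k[X]/(X^e) is e
  by_cases he : e = 0
  · subst he
    have hsub : Subsingleton (Qe (k := k) 0) := by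
      rw [Qe, AdjoinRoot]
      refine Ideal.Quotient.subsingleton_iff.mpr ?_
      rw [pow_zero, Ideal.span_singleton_one]
    exact Module.finrank_zero_of_subsingleton
  · rw [(AdjoinRoot.powerBasis (f := (Polynomial.X : Polynomial k) ^ e)
      (pow_ne_zero _ Polynomial.X_ne_zero)).finrank, AdjoinRoot.powerBasis_dim,
      Polynomial.natDegree_X_pow]

end LocalMain

section Instantiate

variable (β : k)

/-- reversed-coefficient sums -/
lemma coeff_rev (d : ℕ) (c : Fin (d + 1) → k) (j : ℕ) :
    (∑ i : Fin (d + 1), Polynomial.C (c i) * Polynomial.X ^ (d - (i : ℕ))).coeff j =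
      if h : j ≤ d then c ⟨d - j, by omega⟩ else 0 := by
  rw [Polynomial.finset_sum_coeff]
  simp only [Polynomial.coeff_C_mul, Polynomial.coeff_X_pow]
  split
  · rename_i h
    rw [Finset.sum_eq_single (⟨d - j, by omega⟩ : Fin (d + 1))]
    · simp [show d - (d - j) = j by omega]
    · intro i _ hne
      have hi := i.2
      have : j ≠ d - (i : ℕ) := by
        intro he
        apply hne
        ext
        simp only []
        omega
      simp [this]
    · simp
  · rename_i h
    refine Finset.sum_eq_zero fun i _ => ?_
    have hi := i.2
    have : j ≠ d - (i : ℕ) := by omega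
    simp [this]

/-- case 1 projection: the affine point `(t, β, 1)` -/
def pi1 (t : k) : MvPolynomial (Fin 3) k →ₐ[k] Polynomial k :=
  aeval ![Polynomial.C t + Polynomial.X, Polynomial.C β, 1]

/-- case 2 projection: the point at infinity `(1, 0, 0)` -/
def pi2 : MvPolynomial (Fin 3) k →ₐ[k] Polynomial k :=
  aeval ![1, Polynomial.C β * Polynomial.X, Polynomial.X]

/-- dehomogenization -/
def rho : MvPolynomial (Fin 3) k →ₐ[k] Polynomial k :=
  aeval ![Polynomial.X, Polynomial.C β, 1]

lemma pi1_X0 (t : k) : pi1 β t (X 0) = Polynomial.C t + Polynomial.X := by simp [pi1]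
lemma pi1_X1 (t : k) : pi1 β t (X 1) = Polynomial.C β := by simp [pi1]
lemma pi1_X2 (t : k) : pi1 β t (X 2) = 1 := by simp [pi1]
lemma pi2_X0 : pi2 β (X 0) = 1 := by simp [pi2]
lemma pi2_X1 : pi2 β (X 1) = Polynomial.C β * Polynomial.X := by simp [pi2]
lemma pi2_X2 : pi2 β (X 2) = Polynomial.X := by simp [pi2]
lemma rho_X0 : rho β (X 0) = Polynomial.X := by simp [rho]
lemma rho_X1 : rho β (X 1) = Polynomial.C β := by simp [rho]
lemma rho_X2 : rho β (X 2) = 1 := by simp [rho]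

lemma pi1_psi (t : k) : ∀ S, pi1 β t (psi β S) = pi1 β t S := by
  intro S
  refine DFunLike.congr_fun (?_ : (pi1 β t).comp (psi β) = pi1 β t) S
  apply MvPolynomial.algHom_ext
  intro i
  fin_cases i
  · show pi1 β t (psi β (X 0)) = pi1 β t (X 0)
    rw [psi_X0]
  · show pi1 β t (psi β (X 1)) = pi1 β t (X 1)
    rw [psi_X1, map_mul, pi1_X2, pi1_X1, pi_C, mul_one]
  · show pi1 β t (psi β (X 2)) = pi1 β t (X 2)
    rw [psi_X2]

lemma pi2_psi : ∀ S, pi2 β (psi β S) = pi2 β S := by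
  intro S
  refine DFunLike.congr_fun (?_ : (pi2 β).comp (psi β) = pi2 β) S
  apply MvPolynomial.algHom_ext
  intro i
  fin_cases i
  · show pi2 β (psi β (X 0)) = pi2 β (X 0)
    rw [psi_X0]
  · show pi2 β (psi β (X 1)) = pi2 β (X 1)
    rw [psi_X1, map_mul, pi2_X2, pi2_X1, pi_C]
  · show pi2 β (psi β (X 2)) = pi2 β (X 2)
    rw [psi_X2]

lemma rho_psi : ∀ S, rho β (psi β S) = rho β S := by
  intro S
  refine DFunLike.congr_fun (?_ : (rho β).comp (psi β) = rho β) S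
  apply MvPolynomial.algHom_ext
  intro i
  fin_cases i
  · show rho β (psi β (X 0)) = rho β (X 0)
    rw [psi_X0]
  · show rho β (psi β (X 1)) = rho β (X 1)
    rw [psi_X1, map_mul, rho_X2, rho_X1, pi_C, mul_one]
  · show rho β (psi β (X 2)) = rho β (X 2)
    rw [psi_X2]

lemma pi1_L (t : k) : pi1 β t (X 1 - C β * X 2) = 0 := by
  rw [map_sub, map_mul, pi1_X1, pi1_X2, pi_C, mul_one, sub_self]

lemma pi2_L : pi2 β (X 1 - C β * X 2) = 0 := by
  rw [map_sub, map_mul, pi2_X1, pi2_X2, pi_C, sub_self]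

lemma span1 (t : k) (d : ℕ) (S : MvPolynomial (Fin 3) k) (hS : S.IsHomogeneous d) :
    psi β S ∈ Submodule.span k (Set.range fun i : Fin (d + 1) =>
      ((X 0 - C t * X 2 : MvPolynomial (Fin 3) k)) ^ (i : ℕ) *
        ((X 2 : MvPolynomial (Fin 3) k)) ^ (d - (i : ℕ))) := by
  rw [S.as_sum, map_sum]
  refine Submodule.sum_mem _ fun u hu => ?_
  have hdeg : u 0 + u 1 + u 2 = d := homog_degree hS hu
  rw [psi, aeval_monomial, Finsupp.prod_pow, Fin.prod_univ_three]
  simp only [Matrix.cons_val_zero, Matrix.cons_val_one, Matrix.head_cons,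
    Matrix.cons_val_two, Matrix.tail_cons]
  have hkey : ∀ a b : ℕ, a + b = d →
      ((X 0 : MvPolynomial (Fin 3) k) ^ a * (X 2 : MvPolynomial (Fin 3) k) ^ b) ∈
        Submodule.span k (Set.range fun i : Fin (d + 1) =>
          ((X 0 - C t * X 2 : MvPolynomial (Fin 3) k)) ^ (i : ℕ) *
            ((X 2 : MvPolynomial (Fin 3) k)) ^ (d - (i : ℕ))) := by
    intro a b hab
    have hX : (X 0 : MvPolynomial (Fin 3) k) ^ a * (X 2 : MvPolynomial (Fin 3) k) ^ b =
        ((X 0 - C t * X 2) + C t * X 2 : MvPolynomial (Fin 3) k) ^ a *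
          (X 2 : MvPolynomial (Fin 3) k) ^ b := by ring_nf
    rw [hX, add_pow, Finset.sum_mul]
    refine Submodule.sum_mem _ fun r hr => ?_
    have hr' : r ≤ a := Nat.lt_succ_iff.mp (Finset.mem_range.mp hr)
    have heq : (X 0 - C t * X 2 : MvPolynomial (Fin 3) k) ^ r * (C t * X 2) ^ (a - r) *
          ((a.choose r : ℕ) : MvPolynomial (Fin 3) k) * (X 2 : MvPolynomial (Fin 3) k) ^ b =
        (t ^ (a - r) * ((a.choose r : ℕ) : k)) •
          ((X 0 - C t * X 2 : MvPolynomial (Fin 3) k) ^ r *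
            (X 2 : MvPolynomial (Fin 3) k) ^ (d - r)) := by
      rw [smul_eq_C_mul, map_mul, map_pow, map_natCast,
        show d - r = (a - r) + b by omega, pow_add, mul_pow]
      ring
    rw [heq]
    exact Submodule.smul_mem _ _ (Submodule.subset_span ⟨⟨r, by omega⟩, rfl⟩)
  have heq2 : algebraMap k (MvPolynomial (Fin 3) k) (coeff u S) *
        ((X 0 : MvPolynomial (Fin 3) k) ^ u 0 * (C β * X 2) ^ u 1 *
          (X 2 : MvPolynomial (Fin 3) k) ^ u 2) =
      (coeff u S * β ^ u 1) •
        ((X 0 : MvPolynomial (Fin 3) k) ^ u 0 * (X 2 : MvPolynomial (Fin 3) k) ^ (u 1 + u 2)) := by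
    rw [smul_eq_C_mul, MvPolynomial.algebraMap_eq, map_mul, map_pow, mul_pow, pow_add]
    ring
  rw [heq2]
  exact Submodule.smul_mem _ _ (hkey (u 0) (u 1 + u 2) (by omega))

lemma span2 (d : ℕ) (S : MvPolynomial (Fin 3) k) (hS : S.IsHomogeneous d) :
    psi β S ∈ Submodule.span k (Set.range fun i : Fin (d + 1) =>
      ((X 2 : MvPolynomial (Fin 3) k)) ^ (i : ℕ) *
        ((X 0 : MvPolynomial (Fin 3) k)) ^ (d - (i : ℕ))) := by
  rw [S.as_sum, map_sum]
  refine Submodule.sum_mem _ fun u hu => ?_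
  have hdeg : u 0 + u 1 + u 2 = d := homog_degree hS hu
  rw [psi, aeval_monomial, Finsupp.prod_pow, Fin.prod_univ_three]
  simp only [Matrix.cons_val_zero, Matrix.cons_val_one, Matrix.head_cons,
    Matrix.cons_val_two, Matrix.tail_cons]
  have heq2 : algebraMap k (MvPolynomial (Fin 3) k) (coeff u S) *
        ((X 0 : MvPolynomial (Fin 3) k) ^ u 0 * (C β * X 2) ^ u 1 *
          (X 2 : MvPolynomial (Fin 3) k) ^ u 2) =
      (coeff u S * β ^ u 1) •
        ((X 2 : MvPolynomial (Fin 3) k) ^ (u 1 + u 2) *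
          (X 0 : MvPolynomial (Fin 3) k) ^ (d - (u 1 + u 2))) := by
    rw [smul_eq_C_mul, MvPolynomial.algebraMap_eq, map_mul, map_pow, mul_pow, pow_add,
      show d - (u 1 + u 2) = u 0 by omega]
    ring
  rw [heq2]
  exact Submodule.smul_mem _ _ (Submodule.subset_span ⟨⟨u 1 + u 2, by omega⟩, rfl⟩)

lemma pi_coeff_zero_eq_eval (π : MvPolynomial (Fin 3) k →ₐ[k] Polynomial k) (v : Fin 3 → k)
    (h : ∀ i, Polynomial.eval 0 (π (X i)) = v i) (T : MvPolynomial (Fin 3) k) :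
    (π T).coeff 0 = eval v T := by
  rw [Polynomial.coeff_zero_eq_eval_zero]
  refine RingHom.congr_fun (?_ : (Polynomial.evalRingHom (0 : k)).comp π.toRingHom =
    (eval v : MvPolynomial (Fin 3) k →+* k)) T
  apply MvPolynomial.ringHom_ext
  · intro r
    simp only [RingHom.comp_apply, AlgHom.toRingHom_eq_coe, RingHom.coe_coe,
      Polynomial.coe_evalRingHom, eval_C]
    rw [pi_C, Polynomial.eval_C]
  · intro i
    simp only [RingHom.comp_apply, AlgHom.toRingHom_eq_coe, RingHom.coe_coe,
      Polynomial.coe_evalRingHom, eval_X]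
    exact h i

lemma hpev_of (π : MvPolynomial (Fin 3) k →ₐ[k] Polynomial k) (v : Fin 3 → k)
    (hv : ∀ T, (π T).coeff 0 = eval v T) {p : Fin 3 → k} {c : k} (hc : c ≠ 0)
    (hp : p = c • v) :
    ∀ (d : ℕ) (T : MvPolynomial (Fin 3) k), T.IsHomogeneous d →
      (eval p T = 0 ↔ (π T).coeff 0 = 0) := by
  intro d T hT
  rw [hv, hp, eval_smul_homog hT]
  constructor
  · intro h
    rcases mul_eq_zero.mp h with h' | h'
    · exact absurd h' (pow_ne_zero _ hc)
    · exact h'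
  · intro h
    rw [h, mul_zero]

end Instantiate

section Cases

variable (β : k)

lemma natDegree_aeval_le (g : Fin 3 → Polynomial k) (hg : ∀ i, (g i).natDegree ≤ 1)
    {d : ℕ} {S : MvPolynomial (Fin 3) k} (hS : S.IsHomogeneous d) :
    (aeval g S).natDegree ≤ d := by
  rw [S.as_sum, map_sum]
  refine Polynomial.natDegree_sum_le_of_forall_le _ _ fun u hu => ?_
  have hdeg : u 0 + u 1 + u 2 = d := homog_degree hS hu
  rw [aeval_monomial, Finsupp.prod_pow, Fin.prod_univ_three]
  have hb : ∀ i : Fin 3, ((g i) ^ (u i)).natDegree ≤ u i := fun i =>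
    Polynomial.natDegree_pow_le.trans (by
      calc u i * (g i).natDegree ≤ u i * 1 := Nat.mul_le_mul_left _ (hg i)
        _ = u i := Nat.mul_one _)
  calc (algebraMap k (Polynomial k) (coeff u S) *
        ((g 0) ^ u 0 * (g 1) ^ u 1 * (g 2) ^ u 2)).natDegree
      ≤ (algebraMap k (Polynomial k) (coeff u S)).natDegree +
        (((g 0) ^ u 0 * (g 1) ^ u 1) * (g 2) ^ u 2).natDegree := Polynomial.natDegree_mul_le
    _ ≤ 0 + ((u 0 + u 1) + u 2) := by
        refine add_le_add (le_of_eq (Polynomial.natDegree_C _)) ?_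
        refine Polynomial.natDegree_mul_le.trans (add_le_add ?_ (hb 2))
        exact Polynomial.natDegree_mul_le.trans (add_le_add (hb 0) (hb 1))
    _ = d := by omega

variable (B : MvPolynomial (Fin 3) k) (m : ℕ)

lemma rho_natDegree_le (hB : B.IsHomogeneous m) : (rho β B).natDegree ≤ m := by
  refine natDegree_aeval_le _ ?_ hB
  intro i
  fin_cases i <;> simp

lemma decompB (hB : B.IsHomogeneous m) :
    ∃ c : Fin (m + 1) → k,
      psi β B = ∑ i : Fin (m + 1),
        C (c i) * (X 2 : MvPolynomial (Fin 3) k) ^ (i : ℕ) *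
          (X 0 : MvPolynomial (Fin 3) k) ^ (m - (i : ℕ)) ∧
      pi2 β B = ∑ i : Fin (m + 1), Polynomial.C (c i) * Polynomial.X ^ (i : ℕ) ∧
      rho β B = ∑ i : Fin (m + 1), Polynomial.C (c i) * Polynomial.X ^ (m - (i : ℕ)) := by
  obtain ⟨c, hc1, hc2⟩ := span_repr (pi2 β) (pi2_X2 β) (pi2_X0 β) (span2 β m B hB)
  rw [pi2_psi] at hc2
  refine ⟨c, hc1, hc2, ?_⟩
  conv_lhs => rw [← rho_psi β B, hc1]
  rw [map_sum]
  refine Finset.sum_congr rfl fun i _ => ?_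
  rw [map_mul, map_mul, map_pow, map_pow, pi_C, rho_X2, rho_X0, one_pow, mul_one]

lemma f_ne_zero (hB : B.IsHomogeneous m)
    (hcop : IsRelPrime B ((X 1 : MvPolynomial (Fin 3) k) - C β * X 2)) :
    rho β B ≠ 0 := by
  intro hf
  obtain ⟨c, hc1, _, hc3⟩ := decompB β B m hB
  have hc0 : ∀ i : Fin (m + 1), c i = 0 := by
    intro i
    have h := coeff_rev m c (m - (i : ℕ))
    rw [← hc3, hf, dif_pos (by omega)] at h
    have hfin : (⟨m - (m - (i : ℕ)), by omega⟩ : Fin (m + 1)) = i := by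
      ext
      have := i.2
      simp only []
      omega
    rw [hfin] at h
    rw [Polynomial.coeff_zero] at h
    exact h.symm
  have hpsi0 : psi β B = 0 := by
    rw [hc1]
    refine Finset.sum_eq_zero fun i _ => ?_
    rw [hc0 i, map_zero, zero_mul, zero_mul]
  have hdvd : ((X 1 : MvPolynomial (Fin 3) k) - C β * X 2) ∣ B := by
    have := L_dvd_sub_psi β B
    rwa [hpsi0, sub_zero] at this
  exact L_not_unit β (hcop hdvd dvd_rfl)

theorem interMult_case1 (t : k) {p : Fin 3 → k} {s : k} (hs : s ≠ 0)
    (hp : p = s • ![t, β, 1]) (hB : B.IsHomogeneous m) (hf0 : rho β B ≠ 0) :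
    interMult k p B ((X 1 : MvPolynomial (Fin 3) k) - C β * X 2) =
      Polynomial.rootMultiplicity t (rho β B) := by
  set f := rho β B with hfdef
  set e := Polynomial.rootMultiplicity t f with hedef
  have hfg : (Polynomial.X - Polynomial.C t) ^ e * (f /ₘ (Polynomial.X - Polynomial.C t) ^ e) = f :=
    Polynomial.pow_mul_divByMonic_rootMultiplicity_eq f t
  set g := f /ₘ (Polynomial.X - Polynomial.C t) ^ e with hgdef
  have hgt : g.eval t ≠ 0 := Polynomial.eval_divByMonic_pow_rootMultiplicity_ne_zero t hf0
  have hπ1 : (pi1 β t) =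
      ((Polynomial.aeval (Polynomial.X + Polynomial.C t) : Polynomial k →ₐ[k] Polynomial k)).comp
        (rho β) := by
    apply MvPolynomial.algHom_ext
    intro i
    fin_cases i
    · show pi1 β t (X 0) = Polynomial.aeval (Polynomial.X + Polynomial.C t) (rho β (X 0))
      rw [pi1_X0, rho_X0, Polynomial.aeval_X, add_comm]
    · show pi1 β t (X 1) = Polynomial.aeval (Polynomial.X + Polynomial.C t) (rho β (X 1))
      rw [pi1_X1, rho_X1, Polynomial.aeval_C, Polynomial.algebraMap_eq]
    · show pi1 β t (X 2) = Polynomial.aeval (Polynomial.X + Polynomial.C t) (rho β (X 2))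
      rw [pi1_X2, rho_X2, map_one]
  have hBu : pi1 β t B =
      Polynomial.X ^ e * (Polynomial.aeval (Polynomial.X + Polynomial.C t) g) := by
    rw [hπ1, AlgHom.comp_apply]
    show Polynomial.aeval (Polynomial.X + Polynomial.C t) f = _
    conv_lhs => rw [← hfg]
    rw [map_mul, map_pow, map_sub, Polynomial.aeval_X, Polynomial.aeval_C,
      Polynomial.algebraMap_eq, add_sub_cancel_right]
  have hu0 : (Polynomial.aeval (Polynomial.X + Polynomial.C t) g).coeff 0 ≠ 0 := by
    rw [Polynomial.coeff_zero_eq_eval_zero, ← Polynomial.comp_eq_aeval, Polynomial.eval_comp]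
    simpa using hgt
  have hℓ1 : ((X 0 : MvPolynomial (Fin 3) k) - C t * X 2).IsHomogeneous 1 :=
    (isHomogeneous_X _ _).sub ((isHomogeneous_X (R := k) 2).C_mul t)
  have hπℓ1 : pi1 β t (X 0 - C t * X 2) = Polynomial.X := by
    rw [map_sub, map_mul, pi1_X0, pi1_X2, pi_C, mul_one, add_sub_cancel_left]
  have hψℓ1 : psi β (X 0 - C t * X 2) = X 0 - C t * X 2 := by
    rw [map_sub, map_mul, psi_X0, psi_X2, psi_C]
  have hv1 : ∀ T, (pi1 β t T).coeff 0 = eval ![t, β, 1] T := by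
    refine pi_coeff_zero_eq_eval (pi1 β t) ![t, β, 1] ?_
    intro i
    fin_cases i
    · show Polynomial.eval 0 (pi1 β t (X 0)) = t
      rw [pi1_X0]; simp
    · show Polynomial.eval 0 (pi1 β t (X 1)) = β
      rw [pi1_X1]; simp
    · show Polynomial.eval 0 (pi1 β t (X 2)) = 1
      rw [pi1_X2]; simp
  exact local_interMult hℓ1 (isHomogeneous_X _ 2) hπℓ1 (pi1_X2 β t) hψℓ1 (psi_X2 β)
    (pi1_psi β t) (span1 β t) (hpev_of (pi1 β t) ![t, β, 1] hv1 hs hp) (pi1_L β t)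
    B m hB e _ hBu hu0

theorem interMult_case2 {p : Fin 3 → k} {s : k} (hs : s ≠ 0)
    (hp : p = s • ![1, 0, 0]) (hB : B.IsHomogeneous m) (hf0 : rho β B ≠ 0) :
    interMult k p B ((X 1 : MvPolynomial (Fin 3) k) - C β * X 2) =
      m - (rho β B).natDegree := by
  set f := rho β B with hfdef
  set n := f.natDegree with hndef
  have hn_le : n ≤ m := rho_natDegree_le β B m hB
  obtain ⟨c, hc1, hc2, hc3⟩ := decompB β B m hB
  have hcoeffs : ∀ i, i ≤ m → (pi2 β B).coeff i = f.coeff (m - i) := by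
    intro i hi
    rw [hc2, coeff_finsum (pi2 β) (pi2_X2 β) (pi2_X0 β) m c i, dif_pos (by omega), hfdef, hc3,
      coeff_rev m c (m - i), dif_pos (by omega)]
    congr 1
    ext
    simp only []
    omega
  have hlow : ∀ i, i < m - n → (pi2 β B).coeff i = 0 := by
    intro i hi
    rw [hcoeffs i (by omega)]
    exact Polynomial.coeff_eq_zero_of_natDegree_lt (by omega)
  obtain ⟨u, hu⟩ := Polynomial.X_pow_dvd_iff.mpr hlow
  have hu0 : u.coeff 0 ≠ 0 := by
    have hcc : (pi2 β B).coeff (m - n) = u.coeff 0 := by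
      rw [hu]
      simpa using Polynomial.coeff_X_pow_mul u (m - n) 0
    rw [← hcc, hcoeffs (m - n) (by omega), show m - (m - n) = n from by omega]
    exact fun h => hf0 (Polynomial.leadingCoeff_eq_zero.mp h)
  have hv2 : ∀ T, (pi2 β T).coeff 0 = eval ![1, 0, 0] T := by
    refine pi_coeff_zero_eq_eval (pi2 β) ![1, 0, 0] ?_
    intro i
    fin_cases i
    · show Polynomial.eval 0 (pi2 β (X 0)) = 1
      rw [pi2_X0]; simp
    · show Polynomial.eval 0 (pi2 β (X 1)) = 0
      rw [pi2_X1]; simp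
    · show Polynomial.eval 0 (pi2 β (X 2)) = 0
      rw [pi2_X2]; simp
  exact local_interMult (isHomogeneous_X _ 2) (isHomogeneous_X _ 0) (pi2_X2 β) (pi2_X0 β)
    (psi_X2 β) (psi_X0 β) (pi2_psi β) (span2 β) (hpev_of (pi2 β) ![1, 0, 0] hv2 hs hp)
    (pi2_L β) B m hB (m - n) u hu hu0

theorem interMult_off {p : Fin 3 → k} (hB : B.IsHomogeneous m)
    (h : eval p ((X 1 : MvPolynomial (Fin 3) k) - C β * X 2) ≠ 0 ∨ eval p B ≠ 0) :
    interMult k p B ((X 1 : MvPolynomial (Fin 3) k) - C β * X 2) = 0 := by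
  have h1 : (1 : Rloc k p) ∈ interIdeal k p B ((X 1 : MvPolynomial (Fin 3) k) - C β * X 2) := by
    rcases h with h | h
    · refine Ideal.subset_span ⟨0, 1, X 1 - C β * X 2, 1, ?_, L_isHomog β, h, ?_⟩
      · have : (0 * B + 1 * ((X 1 : MvPolynomial (Fin 3) k) - C β * X 2)) =
            X 1 - C β * X 2 := by ring
        rw [this]
        exact L_isHomog β
      · have h2 : ((1 : Rloc k p) : FracF k) = 1 := rfl
        rw [h2, one_mul]
        congr 1
        ring
    · refine Ideal.subset_span ⟨1, 0, B, m, ?_, hB, h, ?_⟩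
      · have : (1 * B + 0 * ((X 1 : MvPolynomial (Fin 3) k) - C β * X 2)) = B := by ring
        rw [this]
        exact hB
      · have h2 : ((1 : Rloc k p) : FracF k) = 1 := rfl
        rw [h2, one_mul]
        congr 1
        ring
  have htop : interIdeal k p B ((X 1 : MvPolynomial (Fin 3) k) - C β * X 2) = ⊤ :=
    (Ideal.eq_top_iff_one _).mpr h1
  rw [interMult, htop]
  haveI : Subsingleton ((Rloc k p) ⧸ (⊤ : Ideal (Rloc k p))) :=
    Ideal.Quotient.subsingleton_iff.mpr rfl
  exact Module.finrank_zero_of_subsingleton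

end Cases

section Main

variable [IsAlgClosed k]

theorem main (β : k) (B : MvPolynomial (Fin 3) k) (m : ℕ)
    (hB : B.IsHomogeneous m)
    (hcop : IsRelPrime B ((X 1 : MvPolynomial (Fin 3) k) - C β * X 2)) :
    ∑ᶠ P : Projectivization k (Fin 3 → k),
      interMult k P.rep B ((X 1 : MvPolynomial (Fin 3) k) - C β * X 2) = m := by
  classical
  set f := rho β B with hfdef
  have hf0 : f ≠ 0 := f_ne_zero β B m hB hcop
  set n := f.natDegree with hndef
  have hn_le : n ≤ m := rho_natDegree_le β B m hB
  have hvt_ne : ∀ t : k, (![t, β, 1] : Fin 3 → k) ≠ 0 := by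
    intro t h
    have h2 := congrFun h 2
    simp at h2
  have hvinf_ne : (![1, 0, 0] : Fin 3 → k) ≠ 0 := by
    intro h
    have h2 := congrFun h 0
    simp at h2
  set Pt : k → Projectivization k (Fin 3 → k) :=
    fun t => Projectivization.mk k ![t, β, 1] (hvt_ne t) with hPtdef
  set Pinf : Projectivization k (Fin 3 → k) := Projectivization.mk k ![1, 0, 0] hvinf_ne
    with hPinfdef
  set μ : Projectivization k (Fin 3 → k) → ℕ :=
    fun P => interMult k P.rep B ((X 1 : MvPolynomial (Fin 3) k) - C β * X 2) with hμdef
  have hfeval : ∀ t : k, f.eval t = eval ![t, β, 1] B := by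
    intro t
    rw [hfdef]
    refine RingHom.congr_fun (?_ : (Polynomial.evalRingHom t).comp (rho β).toRingHom =
      (eval ![t, β, 1] : MvPolynomial (Fin 3) k →+* k)) B
    apply MvPolynomial.ringHom_ext
    · intro r
      simp only [RingHom.comp_apply, AlgHom.toRingHom_eq_coe, RingHom.coe_coe,
        Polynomial.coe_evalRingHom, eval_C]
      rw [pi_C, Polynomial.eval_C]
    · intro i
      simp only [RingHom.comp_apply, AlgHom.toRingHom_eq_coe, RingHom.coe_coe,
        Polynomial.coe_evalRingHom, eval_X]
      fin_cases i
      · show Polynomial.eval t (rho β (X 0)) = (![t, β, 1] : Fin 3 → k) 0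
        rw [rho_X0]; simp
      · show Polynomial.eval t (rho β (X 1)) = (![t, β, 1] : Fin 3 → k) 1
        rw [rho_X1]; simp
      · show Polynomial.eval t (rho β (X 2)) = (![t, β, 1] : Fin 3 → k) 2
        rw [rho_X2]; simp
  have hrep : ∀ (P : Projectivization k (Fin 3 → k)) (v : Fin 3 → k) (hv : v ≠ 0),
      P = Projectivization.mk k v hv → ∃ s : k, s ≠ 0 ∧ P.rep = s • v := by
    intro P v hv hPv
    have h1 : Projectivization.mk k P.rep P.rep_nonzero = Projectivization.mk k v hv := by
      rw [Projectivization.mk_rep, hPv]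
    obtain ⟨a, ha⟩ := (Projectivization.mk_eq_mk_iff k _ _ _ _).mp h1
    exact ⟨(a : k), a.ne_zero, by rw [← ha, Units.smul_def]⟩
  have hμt : ∀ t : k, μ (Pt t) = Polynomial.rootMultiplicity t f := by
    intro t
    obtain ⟨s, hs, hPs⟩ := hrep (Pt t) _ (hvt_ne t) rfl
    exact interMult_case1 β B m t hs hPs hB hf0
  have hμinf : μ Pinf = m - n := by
    obtain ⟨s, hs, hPs⟩ := hrep Pinf _ hvinf_ne rfl
    exact interMult_case2 β B m hs hPs hB hf0
  have hsupp : ∀ P, μ P ≠ 0 → P = Pinf ∨ ∃ t, f.eval t = 0 ∧ P = Pt t := by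
    intro P hP
    have hLB : eval P.rep ((X 1 : MvPolynomial (Fin 3) k) - C β * X 2) = 0 ∧
        eval P.rep B = 0 := by
      by_contra hcon
      apply hP
      rw [hμdef]
      refine interMult_off β B m hB ?_
      rcases not_and_or.mp hcon with h | h
      · exact Or.inl h
      · exact Or.inr h
    obtain ⟨hL0, hB0⟩ := hLB
    set p := P.rep with hpdef
    have hL0' : p 1 = β * p 2 := by
      have he : eval p ((X 1 : MvPolynomial (Fin 3) k) - C β * X 2) = p 1 - β * p 2 := by
        simp
      rw [he] at hL0
      exact sub_eq_zero.mp hL0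
    have hpne := P.rep_nonzero
    by_cases hp2 : p 2 = 0
    · left
      have hp1 : p 1 = 0 := by rw [hL0', hp2, mul_zero]
      have hp0 : p 0 ≠ 0 := by
        intro h0
        apply hpne
        funext i
        fin_cases i
        · exact h0
        · exact hp1
        · exact hp2
      have hsm : (Units.mk0 (p 0) hp0 : kˣ) • (![1, 0, 0] : Fin 3 → k) = p := by
        rw [Units.smul_def]
        funext i
        fin_cases i <;> simp [Units.smul_def, hp1, hp2]
      have hPP : Projectivization.mk k p hpne = Pinf := by
        rw [hPinfdef]
        exact (Projectivization.mk_eq_mk_iff k _ _ _ _).mpr ⟨Units.mk0 (p 0) hp0, hsm⟩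
      rw [← hPP]
      exact (Projectivization.mk_rep P).symm
    · right
      have hsm0 : p = p 2 • (![p 0 * (p 2)⁻¹, β, 1] : Fin 3 → k) := by
        funext i
        fin_cases i
        · show p 0 = p 2 * (p 0 * (p 2)⁻¹)
          field_simp
        · show p 1 = p 2 * β
          rw [hL0']; ring
        · show p 2 = p 2 * 1
          rw [mul_one]
      refine ⟨p 0 * (p 2)⁻¹, ?_, ?_⟩
      · rw [hfeval]
        have hB0' := hB0
        rw [hsm0, eval_smul_homog hB] at hB0'
        exact (mul_eq_zero.mp hB0').resolve_left (pow_ne_zero _ hp2)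
      · have hsm : (Units.mk0 (p 2) hp2 : kˣ) • (![p 0 * (p 2)⁻¹, β, 1] : Fin 3 → k) = p := by
          rw [Units.smul_def]
          exact hsm0.symm
        have hPP : Projectivization.mk k p hpne = Pt (p 0 * (p 2)⁻¹) := by
          rw [hPtdef]
          exact (Projectivization.mk_eq_mk_iff k _ _ _ _).mpr ⟨Units.mk0 (p 2) hp2, hsm⟩
        rw [← hPP]
        exact (Projectivization.mk_rep P).symm
  have hPtnotinf : ∀ t, Pt t ≠ Pinf := by
    intro t h
    obtain ⟨a, ha⟩ := (Projectivization.mk_eq_mk_iff k _ _ _ _).mp h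
    have h2 := congrFun ha 2
    simp [Units.smul_def] at h2
  have hPtinj : ∀ t1 t2 : k, Pt t1 = Pt t2 → t1 = t2 := by
    intro t1 t2 h
    obtain ⟨a, ha⟩ := (Projectivization.mk_eq_mk_iff k _ _ _ _).mp h
    have h2 := congrFun ha 2
    have h0 := congrFun ha 0
    simp only [Units.smul_def, Pi.smul_apply, smul_eq_mul] at h2 h0
    simp only [Matrix.cons_val_zero, Matrix.cons_val_two, Matrix.tail_cons, Matrix.head_cons] at h2 h0
    rw [mul_one] at h2
    rw [h2, one_mul] at h0
    exact h0.symm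
  set Fs : Finset (Projectivization k (Fin 3 → k)) :=
    insert Pinf (f.roots.toFinset.image Pt) with hFsdef
  have hsub : Function.support μ ⊆ ↑Fs := by
    intro P hP
    rcases hsupp P hP with h | ⟨t, ht, hPt'⟩
    · rw [h]
      exact Finset.mem_coe.mpr (Finset.mem_insert_self _ _)
    · rw [hPt']
      refine Finset.mem_coe.mpr (Finset.mem_insert_of_mem ?_)
      refine Finset.mem_image_of_mem _ (Multiset.mem_toFinset.mpr ?_)
      exact (Polynomial.mem_roots hf0).mpr ht
  have hnotmem : Pinf ∉ f.roots.toFinset.image Pt := by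
    intro h
    obtain ⟨t, _, ht⟩ := Finset.mem_image.mp h
    exact hPtnotinf t ht
  have hstep : ∑ᶠ P : Projectivization k (Fin 3 → k), μ P = ∑ P ∈ Fs, μ P :=
    finsum_eq_sum_of_support_subset μ hsub
  show ∑ᶠ P : Projectivization k (Fin 3 → k), μ P = m
  rw [hstep, hFsdef, Finset.sum_insert hnotmem,
    Finset.sum_image (fun x _ y _ h => hPtinj x y h)]
  have hsum : ∑ t ∈ f.roots.toFinset, μ (Pt t) = n := by
    calc ∑ t ∈ f.roots.toFinset, μ (Pt t) = ∑ t ∈ f.roots.toFinset, f.roots.count t := by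
          refine Finset.sum_congr rfl fun t _ => ?_
          rw [hμt, Polynomial.count_roots]
      _ = Multiset.card f.roots := Multiset.toFinset_sum_count_eq _
      _ = n := Polynomial.splits_iff_card_roots.mp (IsAlgClosed.splits f)
  rw [hμinf, hsum]
  omega

end Main

end

end BezoutAux


open MvPolynomial

/-- A curve of degree `m` meets a line `y - βz` in exactly `m` points counted with
multiplicity. -/
theorem stmt13 {K : Type} [Field K] (A : MvPolynomial (Fin 3) K) (m : ℕ)
    (hA : A.IsHomogeneous m) (β : AlgebraicClosure K)
    (hcop : IsRelPrime (MvPolynomial.map (algebraMap K (AlgebraicClosure K)) A)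
      ((X 1 : MvPolynomial (Fin 3) (AlgebraicClosure K)) - C β * X 2)) :
    ∑ᶠ P : Projectivization (AlgebraicClosure K) (Fin 3 → AlgebraicClosure K),
      interMult (AlgebraicClosure K) P.rep
        (MvPolynomial.map (algebraMap K (AlgebraicClosure K)) A)
        ((X 1 : MvPolynomial (Fin 3) (AlgebraicClosure K)) - C β * X 2) = m :=
  BezoutAux.main β (MvPolynomial.map (algebraMap K (AlgebraicClosure K)) A) m
    (hA.map _) hcop
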